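/- The CASMOPOLITAN kernel k(x,x') = exp((1/n) Σ_{i=1}^n ℓ_i δ(x_i, x_i')) with ℓ_i > 0 is, up to a positive multiplicative constant, equal to the ARD heat kernel on the Hamming graph: Π_{i=1}^n [(1 − e^{−β_i g_i})/(1 + (g_i−1)e^{−β_i g_i})]^{1−δ(x_i,x_i')}, for an appropriate bijective reparameterization between (ℓ_i) and (β_i), where g_i = |X_i| ≥ 2. -/
import Mathlib


/-- the CASMOPOLITAN kernel equals, up to a positive multiplicative constant,
the ARD heat kernel on the Hamming graph, under the reparameterization
`ℓ_i / n = −ln((1 − e^{−β_i g_i})/(1 + (g_i − 1) e^{−β_i g_i}))`. -/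
theorem stmt_3 (n : ℕ) (hn : 0 < n)
    (X : Fin n → Type*) [∀ i, Fintype (X i)] [∀ i, DecidableEq (X i)]
    (hg : ∀ i, 2 ≤ Fintype.card (X i))
    (ℓ β : Fin n → ℝ) (hℓ : ∀ i, 0 < ℓ i) (hβ : ∀ i, 0 < β i)
    (hparam : ∀ i, ℓ i / n =
      -Real.log ((1 - Real.exp (-(β i) * (Fintype.card (X i) : ℝ))) /
        (1 + ((Fintype.card (X i) : ℝ) - 1) * Real.exp (-(β i) * (Fintype.card (X i) : ℝ))))) :
    ∃ C : ℝ, 0 < C ∧ ∀ x x' : ∀ i, X i,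
      Real.exp ((1 / (n : ℝ)) * ∑ i, ℓ i * (if x i = x' i then 1 else 0)) =
        C * ∏ i, (if x i = x' i then 1 else
          (1 - Real.exp (-(β i) * (Fintype.card (X i) : ℝ))) /
            (1 + ((Fintype.card (X i) : ℝ) - 1) * Real.exp (-(β i) * (Fintype.card (X i) : ℝ)))) := by
  set r : Fin n → ℝ := fun i =>
    (1 - Real.exp (-(β i) * (Fintype.card (X i) : ℝ))) /
      (1 + ((Fintype.card (X i) : ℝ) - 1) * Real.exp (-(β i) * (Fintype.card (X i) : ℝ))) with hr_def
  have hr : ∀ i, 0 < r i := by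
    intro i
    have hcard : (2 : ℝ) ≤ (Fintype.card (X i) : ℝ) := by exact_mod_cast hg i
    have hexp : Real.exp (-(β i) * (Fintype.card (X i) : ℝ)) < 1 := by
      rw [Real.exp_lt_one_iff]
      have : 0 < (β i) * (Fintype.card (X i) : ℝ) :=
        mul_pos (hβ i) (by linarith)
      linarith
    have hexp0 : 0 < Real.exp (-(β i) * (Fintype.card (X i) : ℝ)) := Real.exp_pos _
    have hnum : 0 < 1 - Real.exp (-(β i) * (Fintype.card (X i) : ℝ)) := by linarith
    have hden : 0 < 1 + ((Fintype.card (X i) : ℝ) - 1) *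
        Real.exp (-(β i) * (Fintype.card (X i) : ℝ)) := by nlinarith
    exact div_pos hnum hden
  have key : ∀ i, Real.exp (ℓ i / n) = (r i)⁻¹ := by
    intro i
    rw [hparam i, Real.exp_neg, Real.exp_log (hr i)]
  refine ⟨∏ i, (r i)⁻¹, Finset.prod_pos fun i _ => inv_pos.mpr (hr i), fun x x' => ?_⟩
  have hn' : (n : ℝ) ≠ 0 := Nat.cast_ne_zero.mpr hn.ne'
  rw [Finset.mul_sum, Real.exp_sum, ← Finset.prod_mul_distrib]
  refine Finset.prod_congr rfl fun i _ => ?_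
  by_cases h : x i = x' i
  · rw [if_pos h, if_pos h, mul_one, mul_one,
      show (1 / (n : ℝ)) * ℓ i = ℓ i / n by ring, key i]
  · rw [if_neg h, if_neg h, mul_zero, mul_zero, Real.exp_zero]
    exact (inv_mul_cancel₀ (hr i).ne').symm
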